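/- Let X be a real random variable with E[X²] < ∞ and let τ ∈ (0,1). Then the function Q_τ(m) = E[R_τ(X−m)] is differentiable on ℝ with derivative Q_τ'(m) = E[ψ_τ(X,m)]. -/

import Mathlib

open MeasureTheory

noncomputable def Rloss (τ u : ℝ) : ℝ :=
  τ * (max u 0) ^ 2 + (1 - τ) * (max (-u) 0) ^ 2

noncomputable def psi (τ x m : ℝ) : ℝ :=
  if m ≤ x then 2 * τ * (m - x) else 2 * (1 - τ) * (m - x)

lemma sqmax_hasDerivAt (u : ℝ) :
    HasDerivAt (fun v : ℝ => max v 0 ^ 2) (2 * max u 0) u := by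
  rcases lt_trichotomy u 0 with h | h | h
  · have : HasDerivAt (fun _ : ℝ => (0:ℝ)) (2 * max u 0) u := by
      simpa [max_eq_right h.le] using (hasDerivAt_const u (0:ℝ))
    refine this.congr_of_eventuallyEq ?_
    filter_upwards [eventually_lt_nhds h] with v hv
    simp [max_eq_right hv.le]
  · subst h
    rw [hasDerivAt_iff_isLittleO]
    simp only [max_self, mul_zero, smul_zero, sub_zero]
    have hz : (max (0:ℝ) 0) ^ 2 = 0 ^ 2 := by norm_num
    rw [Asymptotics.isLittleO_iff]
    intro c hc
    filter_upwards [eventually_abs_sub_lt 0 hc] with v hv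
    have h1 : |max v 0 ^ 2| ≤ |v| * |v| := by
      rcases le_or_gt v 0 with h | h
      · simp [max_eq_right h]; exact mul_self_nonneg v
      · rw [max_eq_left h.le, abs_of_nonneg (sq_nonneg v), sq]
        exact (abs_mul_abs_self v).ge
    have h2 : ‖max v 0 ^ 2 - 0 ^ 2‖ = |max v 0 ^ 2| := by norm_num
    calc ‖max v 0 ^ 2 - 0 ^ 2‖ = |max v 0 ^ 2| := h2
      _ ≤ |v| * |v| := h1
      _ ≤ c * |v| := by
          apply mul_le_mul_of_nonneg_right _ (abs_nonneg v)
          simpa using hv.le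
      _ = c * ‖v‖ := rfl
  · have : HasDerivAt (fun v : ℝ => v ^ 2) (2 * max u 0) u := by
      simpa [max_eq_left h.le, mul_comm] using (hasDerivAt_pow 2 u)
    refine this.congr_of_eventuallyEq ?_
    filter_upwards [eventually_gt_nhds h] with v hv
    simp [max_eq_left hv.le]

lemma Rloss_hasDerivAt (τ x m : ℝ) :
    HasDerivAt (fun m : ℝ => Rloss τ (x - m)) (psi τ x m) m := by
  have hsub : HasDerivAt (fun m : ℝ => x - m) (-1) m := (hasDerivAt_id m).const_sub x
  have hsub' : HasDerivAt (fun m : ℝ => m - x) 1 m := (hasDerivAt_id m).sub_const x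
  have h1 : HasDerivAt (fun m : ℝ => max (x - m) 0 ^ 2) (2 * max (x - m) 0 * (-1)) m :=
    (sqmax_hasDerivAt (x - m)).comp m hsub
  have h2 : HasDerivAt (fun m : ℝ => max (m - x) 0 ^ 2) (2 * max (m - x) 0 * 1) m :=
    by have := (sqmax_hasDerivAt (m - x)).comp m hsub'; exact this
  have h : HasDerivAt (fun m : ℝ => τ * max (x - m) 0 ^ 2 + (1 - τ) * max (m - x) 0 ^ 2)
      (τ * (2 * max (x - m) 0 * (-1)) + (1 - τ) * (2 * max (m - x) 0 * 1)) m :=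
    (h1.const_mul τ).add (h2.const_mul (1 - τ))
  have heq : (fun m : ℝ => τ * max (x - m) 0 ^ 2 + (1 - τ) * max (m - x) 0 ^ 2) =
      fun m : ℝ => Rloss τ (x - m) := by
    funext m; simp [Rloss, neg_sub]
  rw [heq] at h
  convert h using 1
  unfold psi
  rcases le_or_gt m x with hmx | hmx
  · rw [if_pos hmx, max_eq_left (by linarith), max_eq_right (by linarith)]
    ring
  · rw [if_neg (not_le.mpr hmx), max_eq_right (by linarith), max_eq_left (by linarith)]
    ring

theorem stmt5 {Ω : Type*} [MeasurableSpace Ω] (μ : Measure Ω) [IsProbabilityMeasure μ]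
    (X : Ω → ℝ) (hX : Measurable X) (hX2 : Integrable (fun ω => (X ω) ^ 2) μ)
    (τ : ℝ) (hτ : τ ∈ Set.Ioo (0:ℝ) 1) (m : ℝ) :
    HasDerivAt (fun m : ℝ => ∫ ω, Rloss τ (X ω - m) ∂μ)
      (∫ ω, psi τ (X ω) m ∂μ) m := by
  obtain ⟨hτ0, hτ1⟩ := hτ
  have hXint : Integrable X μ := by
    refine Integrable.mono' ((integrable_const (1:ℝ)).add hX2) hX.aestronglyMeasurable ?_
    filter_upwards with ω
    simp only [Pi.add_apply]
    rw [Real.norm_eq_abs]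
    nlinarith [sq_abs (X ω), sq_nonneg (|X ω| - 1), abs_nonneg (X ω)]
  have key := hasDerivAt_integral_of_dominated_loc_of_deriv_le
    (F := fun m ω => Rloss τ (X ω - m)) (F' := fun m ω => psi τ (X ω) m)
    (bound := fun ω => 2 * (|m| + 1 + |X ω|)) (μ := μ) (x₀ := m) (s := Metric.ball m 1) (Metric.ball_mem_nhds m one_pos)
    ?_ ?_ ?_ ?_ ?_ ?_
  · exact key.2
  · filter_upwards with m'
    have : Measurable fun ω => Rloss τ (X ω - m') := by
      unfold Rloss
      exact (((hX.sub_const m').max measurable_const).pow_const 2).const_mul τ |>.add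
        ((((hX.sub_const m').neg.max measurable_const).pow_const 2).const_mul (1 - τ))
    exact this.aestronglyMeasurable
  · -- integrability of F x₀
    refine Integrable.mono' (((hX2.const_mul 2).add (integrable_const (2 * m ^ 2))))
      ?_ ?_
    · have : Measurable fun ω => Rloss τ (X ω - m) := by
        unfold Rloss
        exact (((hX.sub_const m).max measurable_const).pow_const 2).const_mul τ |>.add
          ((((hX.sub_const m).neg.max measurable_const).pow_const 2).const_mul (1 - τ))
      exact this.aestronglyMeasurable
    · filter_upwards with ω
      have h0 : (0:ℝ) ≤ Rloss τ (X ω - m) := by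
        unfold Rloss
        have h1 : (0:ℝ) ≤ max (X ω - m) 0 := le_max_right _ _
        have h2 : (0:ℝ) ≤ max (-(X ω - m)) 0 := le_max_right _ _
        nlinarith
      simp only [Pi.add_apply]
      rw [Real.norm_eq_abs, abs_of_nonneg h0]
      unfold Rloss
      rcases le_or_gt (X ω - m) 0 with h | h
      · rw [max_eq_right h, max_eq_left (by linarith)]
        nlinarith [sq_nonneg (X ω + m), sq_nonneg (X ω - m)]
      · rw [max_eq_left h.le, max_eq_right (by linarith)]
        nlinarith [sq_nonneg (X ω + m), sq_nonneg (X ω - m)]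
  · -- measurability of F'
    have : Measurable fun ω => psi τ (X ω) m := by
      have : Measurable fun x : ℝ => psi τ x m := by
        unfold psi
        exact Measurable.ite (measurableSet_le measurable_const measurable_id)
          ((measurable_id.const_sub m).const_mul (2 * τ))
          ((measurable_id.const_sub m).const_mul (2 * (1 - τ)))
      exact this.comp hX
    exact this.aestronglyMeasurable
  · -- bound
    filter_upwards with ω m' hm'
    have hball : |m' - m| < 1 := by
      rw [Metric.mem_ball, Real.dist_eq] at hm'
      exact hm'
    have hm'abs : |m'| ≤ |m| + 1 := by
      have := abs_sub_abs_le_abs_sub m' m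
      linarith
    have habs : |m' - X ω| ≤ |m| + 1 + |X ω| := by
      have := abs_sub (m') (X ω)
      calc |m' - X ω| ≤ |m'| + |X ω| := abs_sub _ _
        _ ≤ |m| + 1 + |X ω| := by linarith
    unfold psi
    rw [Real.norm_eq_abs]
    split_ifs with h
    · rw [abs_mul]
      have h1 : |2 * τ| ≤ 2 := by rw [abs_of_nonneg (by linarith)]; linarith
      calc |2 * τ| * |m' - X ω| ≤ 2 * |m' - X ω| :=
            mul_le_mul_of_nonneg_right h1 (abs_nonneg _)
        _ ≤ 2 * (|m| + 1 + |X ω|) := by linarith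
    · rw [abs_mul]
      have h1 : |2 * (1 - τ)| ≤ 2 := by rw [abs_of_nonneg (by linarith)]; linarith
      calc |2 * (1 - τ)| * |m' - X ω| ≤ 2 * |m' - X ω| :=
            mul_le_mul_of_nonneg_right h1 (abs_nonneg _)
        _ ≤ 2 * (|m| + 1 + |X ω|) := by linarith
  · -- bound integrable
    exact (((integrable_const (|m| + 1)).add hXint.abs).const_mul 2).congr
      (by filter_upwards with ω; simp only [Pi.add_apply]; try ring)
  · -- differentiability
    filter_upwards with ω m' _
    exact Rloss_hasDerivAt τ (X ω) m'
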